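/- The function g(q) = 8(2E(q) − K(q))²(2q² − 1) is strictly monotone on each of the intervals (1/√2, q̂], [q̂, q*], and [q*, 1): strictly increasing on (1/√2, q̂], strictly decreasing on [q̂, q*], and strictly increasing on [q*, 1), where q̂ is the unique zero of f in (1/√2, q*) and q* is the unique zero of 2E − K; in particular g has a local maximum at q̂ and local minimum value g(q*) = 0. -/

import Mathlib

open Real Set Filter

noncomputable def Kc (q : ℝ) : ℝ := ∫ θ in (0:ℝ)..(π/2), 1 / Real.sqrt (1 - q^2 * Real.sin θ^2)

noncomputable def Ec (q : ℝ) : ℝ := ∫ θ in (0:ℝ)..(π/2), Real.sqrt (1 - q^2 * Real.sin θ^2)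

noncomputable def fc (q : ℝ) : ℝ := (4*q^4 - 5*q^2 + 1) * Kc q + (-8*q^4 + 8*q^2 - 1) * Ec q


noncomputable def gc (q : ℝ) : ℝ := 8 * (2 * Ec q - Kc q)^2 * (2*q^2 - 1)

open MeasureTheory intervalIntegral

namespace EllAux

lemma u_pos {q : ℝ} (hq : q^2 < 1) (θ : ℝ) : 0 < 1 - q^2 * Real.sin θ^2 := by
  nlinarith [mul_le_mul_of_nonneg_left (Real.sin_sq_le_one θ) (sq_nonneg q)]

lemma sqrtu_pos {q : ℝ} (hq : q^2 < 1) (θ : ℝ) : 0 < Real.sqrt (1 - q^2 * Real.sin θ^2) :=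
  Real.sqrt_pos.mpr (u_pos hq θ)

lemma cont_u (q : ℝ) : Continuous fun θ : ℝ => 1 - q^2 * Real.sin θ^2 := by fun_prop

lemma cont_sqrtu (q : ℝ) : Continuous fun θ : ℝ => Real.sqrt (1 - q^2 * Real.sin θ^2) :=
  (cont_u q).sqrt

lemma cont_invsqrtu {q : ℝ} (hq : q^2 < 1) :
    Continuous fun θ : ℝ => 1 / Real.sqrt (1 - q^2 * Real.sin θ^2) :=
  continuous_const.div (cont_sqrtu q) fun θ => (sqrtu_pos hq θ).ne'

lemma cont_e3 {q : ℝ} (hq : q^2 < 1) :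
    Continuous fun θ : ℝ =>
      1 / ((1 - q^2 * Real.sin θ^2) * Real.sqrt (1 - q^2 * Real.sin θ^2)) :=
  continuous_const.div ((cont_u q).mul (cont_sqrtu q))
    fun θ => (mul_pos (u_pos hq θ) (sqrtu_pos hq θ)).ne'

lemma Kc_pos {q : ℝ} (hq : q^2 < 1) : 0 < Kc q := by
  apply intervalIntegral_pos_of_pos ((cont_invsqrtu hq).intervalIntegrable _ _)
  · intro θ
    have := sqrtu_pos hq θ
    positivity
  · positivity

lemma Ec_pos {q : ℝ} (hq : q^2 < 1) : 0 < Ec q := by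
  apply intervalIntegral_pos_of_pos ((cont_sqrtu q).intervalIntegrable _ _)
  · exact fun θ => sqrtu_pos hq θ
  · positivity

lemma Ec_lt_Kc {q : ℝ} (hq0 : 0 < q) (hq : q^2 < 1) : Ec q < Kc q := by
  apply integral_lt_integral_of_continuousOn_of_le_of_exists_lt (by positivity)
    (cont_sqrtu q).continuousOn (cont_invsqrtu hq).continuousOn
  · intro θ _
    have hu := u_pos hq θ
    have h1 : 1 - q^2 * Real.sin θ^2 ≤ 1 := by nlinarith [sq_nonneg (q * Real.sin θ)]
    have hs1 : Real.sqrt (1 - q^2 * Real.sin θ^2) ≤ 1 :=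
      Real.sqrt_le_one.mpr h1
    calc Real.sqrt (1 - q^2 * Real.sin θ^2) ≤ 1 := hs1
      _ ≤ 1 / Real.sqrt (1 - q^2 * Real.sin θ^2) := by
          rw [le_div_iff₀ (sqrtu_pos hq θ)]; simpa using hs1
  · refine ⟨π/4, ⟨by positivity, by linarith [pi_pos]⟩, ?_⟩
    have hs : Real.sin (π/4) ^ 2 = 1/2 := by
      rw [Real.sin_pi_div_four]; rw [div_pow]; rw [sq_sqrt (by norm_num : (2:ℝ) ≥ 0)]; norm_num
    have hu := u_pos hq (π/4)
    have hlt : 1 - q^2 * Real.sin (π/4)^2 < 1 := by rw [hs]; nlinarith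
    have h1 : Real.sqrt (1 - q^2 * Real.sin (π/4)^2) < 1 := by
      nlinarith [Real.sq_sqrt hu.le, Real.sqrt_nonneg (1 - q^2 * Real.sin (π/4)^2)]
    calc Real.sqrt (1 - q^2 * Real.sin (π/4)^2) < 1 := h1
      _ ≤ 1 / Real.sqrt (1 - q^2 * Real.sin (π/4)^2) := by
          rw [le_div_iff₀ (sqrtu_pos hq (π/4))]; simpa using h1.le

end EllAux

section Deriv
open intervalIntegral EllAux

-- pointwise derivative of the K integrand in the parameter
lemma hasDerivAt_Kint {x : ℝ} (hx : x^2 < 1) (θ : ℝ) :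
    HasDerivAt (fun y : ℝ => 1 / Real.sqrt (1 - y^2 * Real.sin θ^2))
      (x * Real.sin θ^2 /
        ((1 - x^2 * Real.sin θ^2) * Real.sqrt (1 - x^2 * Real.sin θ^2))) x := by
  have hu := u_pos hx θ
  have hs := sqrtu_pos hx θ
  have hI : HasDerivAt (fun y : ℝ => 1 - y^2 * Real.sin θ^2)
      (-(2 * x ^ 1 * Real.sin θ^2)) x := by
    simpa using (((hasDerivAt_pow 2 x).mul_const (Real.sin θ^2)).const_sub 1)
  have hR := (Real.hasDerivAt_sqrt hu.ne').comp x hI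
  have hD := (hasDerivAt_const x (1:ℝ)).div hR hs.ne'
  refine hD.congr_deriv ?_
  have hsq : Real.sqrt (1 - x^2 * Real.sin θ^2) ^ 2 = 1 - x^2 * Real.sin θ^2 :=
    Real.sq_sqrt hu.le
  simp only [Function.comp_apply, Function.comp_def]
  rw [hsq]
  field_simp
  ring

lemma hasDerivAt_Eint {x : ℝ} (hx : x^2 < 1) (θ : ℝ) :
    HasDerivAt (fun y : ℝ => Real.sqrt (1 - y^2 * Real.sin θ^2))
      (-(x * Real.sin θ^2) / Real.sqrt (1 - x^2 * Real.sin θ^2)) x := by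
  have hu := u_pos hx θ
  have hs := sqrtu_pos hx θ
  have hI : HasDerivAt (fun y : ℝ => 1 - y^2 * Real.sin θ^2)
      (-(2 * x ^ 1 * Real.sin θ^2)) x := by
    simpa using (((hasDerivAt_pow 2 x).mul_const (Real.sin θ^2)).const_sub 1)
  have hR := (Real.hasDerivAt_sqrt hu.ne').comp x hI
  refine hR.congr_deriv ?_
  field_simp

end Deriv

section Dom
open intervalIntegral EllAux

lemma cont_dK {q : ℝ} (hq : q^2 < 1) :
    Continuous fun θ : ℝ => q * Real.sin θ^2 /
      ((1 - q^2 * Real.sin θ^2) * Real.sqrt (1 - q^2 * Real.sin θ^2)) :=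
  (continuous_const.mul (Real.continuous_sin.pow 2)).div
    ((cont_u q).mul (cont_sqrtu q))
    (fun θ => (mul_pos (u_pos hq θ) (sqrtu_pos hq θ)).ne')

lemma cont_dE {q : ℝ} (hq : q^2 < 1) :
    Continuous fun θ : ℝ => -(q * Real.sin θ^2) / Real.sqrt (1 - q^2 * Real.sin θ^2) :=
  ((continuous_const.mul (Real.continuous_sin.pow 2)).neg).div (cont_sqrtu q)
    (fun θ => (sqrtu_pos hq θ).ne')

lemma ball_abs_lt {q x : ℝ} (hq : q ∈ Set.Ioo (0:ℝ) 1)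
    (hx : x ∈ Metric.ball q ((1-q)/2)) : |x| < (1+q)/2 := by
  obtain ⟨hq0, hq1⟩ := hq
  rw [Metric.mem_ball, Real.dist_eq, abs_lt] at hx
  rw [abs_lt]; constructor <;> nlinarith

lemma ball_sq_lt {q x : ℝ} (hq : q ∈ Set.Ioo (0:ℝ) 1)
    (hx : x ∈ Metric.ball q ((1-q)/2)) : x^2 < ((1+q)/2)^2 := by
  have h := ball_abs_lt hq hx
  nlinarith [abs_nonneg x, sq_abs x]

lemma hasDerivAt_Kc' {q : ℝ} (hq : q ∈ Set.Ioo (0:ℝ) 1) :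
    HasDerivAt Kc (∫ θ in (0:ℝ)..(π/2),
      q * Real.sin θ^2 /
        ((1 - q^2 * Real.sin θ^2) * Real.sqrt (1 - q^2 * Real.sin θ^2))) q := by
  obtain ⟨hq0, hq1⟩ := hq
  have hqsq : q^2 < 1 := by nlinarith
  set r : ℝ := (1+q)/2 with hr
  have hr1 : r^2 < 1 := by rw [hr]; nlinarith
  have hrpos : 0 < r := by rw [hr]; linarith
  have hur : 0 < 1 - r^2 := by linarith
  have hεpos : 0 < (1-q)/2 := by linarith
  have key := hasDerivAt_integral_of_dominated_loc_of_deriv_le (𝕜 := ℝ) (μ := volume)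
    (F := fun x θ => 1 / Real.sqrt (1 - x^2 * Real.sin θ^2))
    (F' := fun x θ => x * Real.sin θ^2 /
        ((1 - x^2 * Real.sin θ^2) * Real.sqrt (1 - x^2 * Real.sin θ^2)))
    (x₀ := q) (a := 0) (b := π/2) (s := Metric.ball q ((1-q)/2))
    (bound := fun _ => r / ((1 - r^2) * Real.sqrt (1 - r^2)))
    (Metric.ball_mem_nhds q hεpos) ?_ ?_ ?_ ?_ ?_ ?_
  · exact key.2
  · filter_upwards with x
    exact (measurable_const.div (cont_sqrtu x).measurable).aestronglyMeasurable
  · exact (cont_invsqrtu hqsq).intervalIntegrable _ _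
  · exact (cont_dK hqsq).aestronglyMeasurable
  · apply MeasureTheory.ae_of_all
    intro θ _ x hx
    have hx2 : x^2 < r^2 := ball_sq_lt ⟨hq0, hq1⟩ hx
    have hxabs : |x| < r := ball_abs_lt ⟨hq0, hq1⟩ hx
    have hx1 : x^2 < 1 := lt_trans hx2 hr1
    have hu := u_pos hx1 θ
    have hs := sqrtu_pos hx1 θ
    have hule : 1 - r^2 ≤ 1 - x^2 * Real.sin θ^2 := by
      nlinarith [mul_le_mul_of_nonneg_right hx2.le (sq_nonneg (Real.sin θ)),
        mul_le_mul_of_nonneg_left (Real.sin_sq_le_one θ) (sq_nonneg x)]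
    have hsle : Real.sqrt (1 - r^2) ≤ Real.sqrt (1 - x^2 * Real.sin θ^2) :=
      Real.sqrt_le_sqrt hule
    have hsr : 0 < Real.sqrt (1 - r^2) := Real.sqrt_pos.mpr hur
    rw [Real.norm_eq_abs, abs_div]
    have hden : |(1 - x^2 * Real.sin θ^2) * Real.sqrt (1 - x^2 * Real.sin θ^2)| =
        (1 - x^2 * Real.sin θ^2) * Real.sqrt (1 - x^2 * Real.sin θ^2) :=
      abs_of_pos (mul_pos hu hs)
    rw [hden]
    apply div_le_div₀ (by positivity)
    · calc |x * Real.sin θ^2| = |x| * Real.sin θ^2 := by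
            rw [abs_mul, abs_of_nonneg (sq_nonneg (Real.sin θ))]
      _ ≤ r * 1 := by
            apply mul_le_mul hxabs.le (Real.sin_sq_le_one θ) (sq_nonneg _) hrpos.le
      _ = r := mul_one r
    · positivity
    · exact mul_le_mul hule hsle hsr.le (by linarith)
  · exact intervalIntegrable_const
  · apply MeasureTheory.ae_of_all
    intro θ _ x hx
    have hx1 : x^2 < 1 := lt_trans (ball_sq_lt ⟨hq0, hq1⟩ hx) hr1
    exact hasDerivAt_Kint hx1 θ

lemma hasDerivAt_Ec' {q : ℝ} (hq : q ∈ Set.Ioo (0:ℝ) 1) :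
    HasDerivAt Ec (∫ θ in (0:ℝ)..(π/2),
      -(q * Real.sin θ^2) / Real.sqrt (1 - q^2 * Real.sin θ^2)) q := by
  obtain ⟨hq0, hq1⟩ := hq
  have hqsq : q^2 < 1 := by nlinarith
  set r : ℝ := (1+q)/2 with hr
  have hr1 : r^2 < 1 := by rw [hr]; nlinarith
  have hrpos : 0 < r := by rw [hr]; linarith
  have hur : 0 < 1 - r^2 := by linarith
  have hεpos : 0 < (1-q)/2 := by linarith
  have key := hasDerivAt_integral_of_dominated_loc_of_deriv_le (𝕜 := ℝ) (μ := volume)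
    (F := fun x θ => Real.sqrt (1 - x^2 * Real.sin θ^2))
    (F' := fun x θ => -(x * Real.sin θ^2) / Real.sqrt (1 - x^2 * Real.sin θ^2))
    (x₀ := q) (a := 0) (b := π/2) (s := Metric.ball q ((1-q)/2))
    (bound := fun _ => r / Real.sqrt (1 - r^2))
    (Metric.ball_mem_nhds q hεpos) ?_ ?_ ?_ ?_ ?_ ?_
  · exact key.2
  · filter_upwards with x
    exact (cont_sqrtu x).aestronglyMeasurable
  · exact (cont_sqrtu q).intervalIntegrable _ _
  · exact (cont_dE hqsq).aestronglyMeasurable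
  · apply MeasureTheory.ae_of_all
    intro θ _ x hx
    have hx2 : x^2 < r^2 := ball_sq_lt ⟨hq0, hq1⟩ hx
    have hxabs : |x| < r := ball_abs_lt ⟨hq0, hq1⟩ hx
    have hx1 : x^2 < 1 := lt_trans hx2 hr1
    have hu := u_pos hx1 θ
    have hs := sqrtu_pos hx1 θ
    have hule : 1 - r^2 ≤ 1 - x^2 * Real.sin θ^2 := by
      nlinarith [mul_le_mul_of_nonneg_right hx2.le (sq_nonneg (Real.sin θ)),
        mul_le_mul_of_nonneg_left (Real.sin_sq_le_one θ) (sq_nonneg x)]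
    have hsle : Real.sqrt (1 - r^2) ≤ Real.sqrt (1 - x^2 * Real.sin θ^2) :=
      Real.sqrt_le_sqrt hule
    have hsr : 0 < Real.sqrt (1 - r^2) := Real.sqrt_pos.mpr hur
    rw [Real.norm_eq_abs, abs_div, abs_of_pos hs]
    apply div_le_div₀ (by positivity)
    · calc |(-(x * Real.sin θ^2))| = |x| * Real.sin θ^2 := by
            rw [abs_neg, abs_mul, abs_of_nonneg (sq_nonneg (Real.sin θ))]
      _ ≤ r * 1 := mul_le_mul hxabs.le (Real.sin_sq_le_one θ) (sq_nonneg _) hrpos.le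
      _ = r := mul_one r
    · positivity
    · exact hsle
  · exact intervalIntegrable_const
  · apply MeasureTheory.ae_of_all
    intro θ _ x hx
    have hx1 : x^2 < 1 := lt_trans (ball_sq_lt ⟨hq0, hq1⟩ hx) hr1
    exact hasDerivAt_Eint hx1 θ

end Dom

section FTC
open intervalIntegral EllAux

lemma ftc_aux {q : ℝ} (hq0 : 0 < q) (hq1 : q < 1) :
    (∫ θ in (0:ℝ)..(π/2),
      (1 / ((1 - q^2 * Real.sin θ^2) * Real.sqrt (1 - q^2 * Real.sin θ^2)) -
        Real.sqrt (1 - q^2 * Real.sin θ^2) / (1 - q^2))) = 0 := by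
  have hqsq : q^2 < 1 := by nlinarith
  have hq2 : (0:ℝ) < 1 - q^2 := by nlinarith
  have key := intervalIntegral.integral_eq_sub_of_hasDerivAt
    (f := fun θ => -q^2 * (Real.sin θ * Real.cos θ) /
      ((1 - q^2) * Real.sqrt (1 - q^2 * Real.sin θ^2)))
    (f' := fun θ => 1 / ((1 - q^2 * Real.sin θ^2) * Real.sqrt (1 - q^2 * Real.sin θ^2)) -
        Real.sqrt (1 - q^2 * Real.sin θ^2) / (1 - q^2))
    (a := 0) (b := π/2) ?_ ?_
  · rw [key]; simp
  · intro θ _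
    have hu := u_pos hqsq θ
    have hs := sqrtu_pos hqsq θ
    have hsq : Real.sqrt (1 - q^2 * Real.sin θ^2) ^ 2 = 1 - q^2 * Real.sin θ^2 :=
      Real.sq_sqrt hu.le
    have hC : Real.cos θ ^ 2 = 1 - Real.sin θ ^ 2 := Real.cos_sq' θ
    have hnum : HasDerivAt (fun θ => -q^2 * (Real.sin θ * Real.cos θ))
        (-q^2 * (Real.cos θ * Real.cos θ + Real.sin θ * -Real.sin θ)) θ :=
      ((Real.hasDerivAt_sin θ).mul (Real.hasDerivAt_cos θ)).const_mul (-q^2)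
    have hI : HasDerivAt (fun θ : ℝ => 1 - q^2 * Real.sin θ^2)
        (-(q^2 * (2 * Real.sin θ ^ 1 * Real.cos θ))) θ := by
      simpa using (((Real.hasDerivAt_sin θ).pow 2).const_mul (q^2)).const_sub 1
    have hR := (Real.hasDerivAt_sqrt hu.ne').comp θ hI
    have hden := hR.const_mul (1 - q^2)
    have hG := hnum.div hden (by positivity)
    refine hG.congr_deriv ?_
    simp only [Function.comp_apply, Function.comp_def, pow_one]
    rw [← hsq]
    have hz3 : Real.sqrt (1 - q^2 * Real.sin θ^2) ^ 3 =
        (1 - q^2 * Real.sin θ^2) * Real.sqrt (1 - q^2 * Real.sin θ^2) := by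
      have : Real.sqrt (1 - q^2 * Real.sin θ^2) ^ 3 =
          Real.sqrt (1 - q^2 * Real.sin θ^2) ^ 2 * Real.sqrt (1 - q^2 * Real.sin θ^2) := by ring
      rw [this, hsq]
    have hz5 : Real.sqrt (1 - q^2 * Real.sin θ^2) ^ 5 =
        (1 - q^2 * Real.sin θ^2)^2 * Real.sqrt (1 - q^2 * Real.sin θ^2) := by
      have : Real.sqrt (1 - q^2 * Real.sin θ^2) ^ 5 =
          (Real.sqrt (1 - q^2 * Real.sin θ^2) ^ 2)^2 * Real.sqrt (1 - q^2 * Real.sin θ^2) := by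
        ring
      rw [this, hsq]
    field_simp
    ring_nf
    rw [Real.sqrt_sq hs.le, hC]
    linear_combination (Real.sqrt (1 - q^2 * Real.sin θ^2) ^ 2 * (Real.sqrt (1 - q^2 * Real.sin θ^2) ^ 2 + q^2 * Real.sin θ^2 - q^2 + 1)) * hsq
  · apply IntervalIntegrable.sub
    · exact (cont_e3 hqsq).intervalIntegrable _ _
    · exact ((cont_sqrtu q).div_const _).intervalIntegrable _ _

lemma J_eq {q : ℝ} (hq0 : 0 < q) (hq1 : q < 1) :
    (∫ θ in (0:ℝ)..(π/2),
      1 / ((1 - q^2 * Real.sin θ^2) * Real.sqrt (1 - q^2 * Real.sin θ^2))) =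
    Ec q / (1 - q^2) := by
  have hqsq : q^2 < 1 := by nlinarith
  have h := ftc_aux hq0 hq1
  rw [intervalIntegral.integral_sub ((cont_e3 hqsq).intervalIntegrable _ _)
    (((cont_sqrtu q).div_const _).intervalIntegrable _ _)] at h
  rw [intervalIntegral.integral_div] at h
  rw [Ec]
  linarith [h]

lemma hasDerivAt_Kc {q : ℝ} (hq : q ∈ Set.Ioo (0:ℝ) 1) :
    HasDerivAt Kc ((Ec q - (1 - q^2) * Kc q) / (q * (1 - q^2))) q := by
  obtain ⟨hq0, hq1⟩ := hq
  have hqsq : q^2 < 1 := by nlinarith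
  have hq2 : (0:ℝ) < 1 - q^2 := by nlinarith
  have h := hasDerivAt_Kc' ⟨hq0, hq1⟩
  have hcongr : (∫ θ in (0:ℝ)..(π/2), q * Real.sin θ^2 /
        ((1 - q^2 * Real.sin θ^2) * Real.sqrt (1 - q^2 * Real.sin θ^2))) =
      ∫ θ in (0:ℝ)..(π/2),
        ((1/q) * (1 / ((1 - q^2 * Real.sin θ^2) * Real.sqrt (1 - q^2 * Real.sin θ^2))) -
         (1/q) * (1 / Real.sqrt (1 - q^2 * Real.sin θ^2))) := by
    apply intervalIntegral.integral_congr
    intro θ _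
    have hu := u_pos hqsq θ
    have hs := sqrtu_pos hqsq θ
    field_simp
    ring
  rw [hcongr] at h
  rw [intervalIntegral.integral_sub
    (((cont_e3 hqsq).const_mul _).intervalIntegrable _ _)
    (((cont_invsqrtu hqsq).const_mul _).intervalIntegrable _ _),
    intervalIntegral.integral_const_mul, intervalIntegral.integral_const_mul,
    J_eq hq0 hq1] at h
  have hKi : (∫ θ in (0:ℝ)..(π/2), 1 / Real.sqrt (1 - q^2 * Real.sin θ^2)) = Kc q := rfl
  rw [hKi] at h
  convert h using 1
  field_simp

lemma hasDerivAt_Ec {q : ℝ} (hq : q ∈ Set.Ioo (0:ℝ) 1) :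
    HasDerivAt Ec ((Ec q - Kc q) / q) q := by
  obtain ⟨hq0, hq1⟩ := hq
  have hqsq : q^2 < 1 := by nlinarith
  have h := hasDerivAt_Ec' ⟨hq0, hq1⟩
  have hcongr : (∫ θ in (0:ℝ)..(π/2),
        -(q * Real.sin θ^2) / Real.sqrt (1 - q^2 * Real.sin θ^2)) =
      ∫ θ in (0:ℝ)..(π/2),
        ((1/q) * Real.sqrt (1 - q^2 * Real.sin θ^2) -
         (1/q) * (1 / Real.sqrt (1 - q^2 * Real.sin θ^2))) := by
    apply intervalIntegral.integral_congr
    intro θ _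
    have hu := u_pos hqsq θ
    have hs := sqrtu_pos hqsq θ
    have hsq : Real.sqrt (1 - q^2 * Real.sin θ^2) ^ 2 = 1 - q^2 * Real.sin θ^2 :=
      Real.sq_sqrt hu.le
    field_simp
    linear_combination (-1) * hsq
  rw [hcongr] at h
  rw [intervalIntegral.integral_sub
    (((cont_sqrtu q).const_mul _).intervalIntegrable _ _)
    (((cont_invsqrtu hqsq).const_mul _).intervalIntegrable _ _),
    intervalIntegral.integral_const_mul, intervalIntegral.integral_const_mul] at h
  have hKi : (∫ θ in (0:ℝ)..(π/2), 1 / Real.sqrt (1 - q^2 * Real.sin θ^2)) = Kc q := rfl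
  have hEi : (∫ θ in (0:ℝ)..(π/2), Real.sqrt (1 - q^2 * Real.sin θ^2)) = Ec q := rfl
  rw [hKi, hEi] at h
  convert h using 1
  field_simp

end FTC

noncomputable def hc (q : ℝ) : ℝ := 2 * Ec q - Kc q

section Signs
open EllAux

lemma hasDerivAt_hc {q : ℝ} (hq : q ∈ Set.Ioo (0:ℝ) 1) :
    HasDerivAt hc (((1 - q^2) * (Ec q - Kc q) - q^2 * Ec q) / (q * (1 - q^2))) q := by
  obtain ⟨hq0, hq1⟩ := hq
  have hq2 : (0:ℝ) < 1 - q^2 := by nlinarith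
  have h := ((hasDerivAt_Ec ⟨hq0, hq1⟩).const_mul 2).sub (hasDerivAt_Kc ⟨hq0, hq1⟩)
  refine h.congr_deriv ?_
  field_simp
  ring

lemma hc_deriv_neg {q : ℝ} (hq : q ∈ Set.Ioo (0:ℝ) 1) :
    ((1 - q^2) * (Ec q - Kc q) - q^2 * Ec q) / (q * (1 - q^2)) < 0 := by
  obtain ⟨hq0, hq1⟩ := hq
  have hq2 : (0:ℝ) < 1 - q^2 := by nlinarith
  have hqsq : q^2 < 1 := by nlinarith
  have hEK := Ec_lt_Kc hq0 hqsq
  have hE := Ec_pos hqsq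
  apply div_neg_of_neg_of_pos
  · nlinarith
  · positivity

lemma hc_contOn : ContinuousOn hc (Set.Ioo (0:ℝ) 1) := fun x hx =>
  ((hasDerivAt_hc hx).continuousAt).continuousWithinAt

lemma hc_strictAnti : StrictAntiOn hc (Set.Ioo (0:ℝ) 1) := by
  apply strictAntiOn_of_deriv_neg (convex_Ioo _ _) hc_contOn
  intro x hx
  rw [interior_Ioo] at hx
  rw [(hasDerivAt_hc hx).deriv]
  exact hc_deriv_neg hx

-- polynomial derivative helpers
lemma hasDerivAt_fc {q : ℝ} (hq : q ∈ Set.Ioo (0:ℝ) 1) :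
    HasDerivAt fc ((16*q^3 - 10*q) * Kc q
      + (4*q^4 - 5*q^2 + 1) * ((Ec q - (1 - q^2) * Kc q) / (q * (1 - q^2)))
      + ((-32*q^3 + 16*q) * Ec q
      + (-8*q^4 + 8*q^2 - 1) * ((Ec q - Kc q) / q))) q := by
  have ha : HasDerivAt (fun q : ℝ => 4*q^4 - 5*q^2 + 1) (16*q^3 - 10*q) q := by
    have := (((hasDerivAt_pow 4 q).const_mul (4:ℝ)).sub
      ((hasDerivAt_pow 2 q).const_mul (5:ℝ))).add_const (1:ℝ)
    refine this.congr_deriv ?_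
    push_cast; ring
  have hb : HasDerivAt (fun q : ℝ => -8*q^4 + 8*q^2 - 1) (-32*q^3 + 16*q) q := by
    have := (((hasDerivAt_pow 4 q).const_mul (-8:ℝ)).add
      ((hasDerivAt_pow 2 q).const_mul (8:ℝ))).sub_const (1:ℝ)
    refine this.congr_deriv ?_
    push_cast; ring
  exact (ha.mul (hasDerivAt_Kc hq)).add (hb.mul (hasDerivAt_Ec hq))

lemma fc_deriv_eq {q : ℝ} (hq : q ∈ Set.Ioo (0:ℝ) 1) :
    (16*q^3 - 10*q) * Kc q
      + (4*q^4 - 5*q^2 + 1) * ((Ec q - (1 - q^2) * Kc q) / (q * (1 - q^2)))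
      + ((-32*q^3 + 16*q) * Ec q
      + (-8*q^4 + 8*q^2 - 1) * ((Ec q - Kc q) / q))
    = q * ((20*q^2 - 13) * Kc q - 20 * (2*q^2 - 1) * Ec q) := by
  obtain ⟨hq0, hq1⟩ := hq
  have hq2 : (0:ℝ) < 1 - q^2 := by nlinarith
  field_simp
  ring

lemma fc_contOn : ContinuousOn fc (Set.Ioo (0:ℝ) 1) := fun x hx =>
  ((hasDerivAt_fc hx).continuousAt).continuousWithinAt

end Signs

section GC
open EllAux

lemma hasDerivAt_gc {q : ℝ} (hq : q ∈ Set.Ioo (0:ℝ) 1) :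
    HasDerivAt gc (16 * (2 * Ec q - Kc q) * fc q / (q * (1 - q^2))) q := by
  obtain ⟨hq0, hq1⟩ := hq
  have hq2 : (0:ℝ) < 1 - q^2 := by nlinarith
  have h1 : HasDerivAt (fun q : ℝ => 2 * Ec q - Kc q)
      (((1 - q^2) * (Ec q - Kc q) - q^2 * Ec q) / (q * (1 - q^2))) q :=
    hasDerivAt_hc ⟨hq0, hq1⟩
  have hpoly : HasDerivAt (fun q : ℝ => 2*q^2 - 1) (4*q) q := by
    have := ((hasDerivAt_pow 2 q).const_mul (2:ℝ)).sub_const (1:ℝ)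
    refine this.congr_deriv ?_
    push_cast; ring
  have h2 := ((h1.pow 2).const_mul (8:ℝ)).mul hpoly
  have h3 : HasDerivAt gc
      (8 * ((2:ℕ) * (2 * Ec q - Kc q) ^ (2-1) *
        (((1 - q^2) * (Ec q - Kc q) - q^2 * Ec q) / (q * (1 - q^2)))) * (2*q^2 - 1)
        + 8 * (2 * Ec q - Kc q) ^ 2 * (4*q)) q := h2
  convert h3 using 1
  rw [fc]
  field_simp
  ring

lemma gc_contOn : ContinuousOn gc (Set.Ioo (0:ℝ) 1) := fun x hx =>
  ((hasDerivAt_gc hx).continuousAt).continuousWithinAt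

lemma fc_neg_upper {x : ℝ} (hx : x ∈ Set.Ioo (0:ℝ) 1) (hx2 : 1/2 < x^2)
    (hK2E : 2 * Ec x < Kc x) : fc x < 0 := by
  obtain ⟨hx0, hx1⟩ := hx
  have hxsq : x^2 < 1 := by nlinarith
  have hK := Kc_pos hxsq
  have hE := Ec_pos hxsq
  rw [fc]
  by_cases hB : 0 ≤ -8*x^4 + 8*x^2 - 1
  · nlinarith [mul_nonneg hB (show (0:ℝ) ≤ Kc x - 2 * Ec x by linarith),
      mul_pos (show (0:ℝ) < x^2 - 1/2 by linarith) hK]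
  · push_neg at hB
    have hA : 4*x^4 - 5*x^2 + 1 < 0 := by nlinarith
    nlinarith [mul_pos_of_neg_of_neg hA (neg_neg_of_pos hK),
      mul_pos_of_neg_of_neg hB (neg_neg_of_pos hE)]

end GC

section Final
open EllAux

theorem stmt_12 (qstar : ℝ) (hqs : qstar ∈ Ioo (0:ℝ) 1) (hqs0 : 2 * Ec qstar = Kc qstar)
    (qhat : ℝ) (hqh : qhat ∈ Ioo (1 / Real.sqrt 2) qstar) (hqh0 : fc qhat = 0) :
    StrictMonoOn gc (Ioc (1 / Real.sqrt 2) qhat) ∧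
    StrictAntiOn gc (Icc qhat qstar) ∧
    StrictMonoOn gc (Ico qstar 1) ∧
    IsLocalMax gc qhat ∧ gc qstar = 0 := by
  obtain ⟨hqs1, hqs2⟩ := hqs
  obtain ⟨hqh1, hqh2⟩ := hqh
  have hs2pos : (0:ℝ) < 1/Real.sqrt 2 := by positivity
  have hs2sq : (1/Real.sqrt 2)^2 = 1/2 := by
    rw [div_pow, one_pow, Real.sq_sqrt (by norm_num : (0:ℝ) ≤ 2)]
  have hstar_mem : qstar ∈ Set.Ioo (0:ℝ) 1 := ⟨hqs1, hqs2⟩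
  have hhat_mem : qhat ∈ Set.Ioo (0:ℝ) 1 :=
    ⟨lt_trans hs2pos hqh1, lt_trans hqh2 hqs2⟩
  have hhc_star : hc qstar = 0 := by rw [hc]; linarith
  have sq_gt : ∀ x : ℝ, 1/Real.sqrt 2 < x → 1/2 < x^2 := by
    intro x hx
    nlinarith [hs2sq, hs2pos]
  have hc_pos : ∀ x ∈ Set.Ioo (0:ℝ) 1, x < qstar → 0 < 2 * Ec x - Kc x := by
    intro x hx hlt
    have h := hc_strictAnti hx hstar_mem hlt
    rw [hhc_star] at h
    rw [hc] at h
    linarith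
  have hc_neg : ∀ x ∈ Set.Ioo (0:ℝ) 1, qstar < x → 2 * Ec x - Kc x < 0 := by
    intro x hx hlt
    have h := hc_strictAnti hstar_mem hx hlt
    rw [hhc_star] at h
    rw [hc] at h
    linarith
  have hsub1 : Set.Icc (1/Real.sqrt 2) qstar ⊆ Set.Ioo (0:ℝ) 1 := fun x hx =>
    ⟨lt_of_lt_of_le hs2pos hx.1, lt_of_le_of_lt hx.2 hqs2⟩
  have hfc_anti : StrictAntiOn fc (Set.Icc (1/Real.sqrt 2) qstar) := by
    apply strictAntiOn_of_deriv_neg (convex_Icc _ _) (fc_contOn.mono hsub1)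
    intro x hx
    rw [interior_Icc] at hx
    have hxm : x ∈ Set.Ioo (0:ℝ) 1 := hsub1 (Set.Ioo_subset_Icc_self hx)
    rw [(hasDerivAt_fc hxm).deriv, fc_deriv_eq hxm]
    have hx2 : 1/2 < x^2 := sq_gt x hx.1
    have hhcx : 0 < 2 * Ec x - Kc x := hc_pos x hxm hx.2
    have hK := Kc_pos (show x^2 < 1 by nlinarith [hxm.1, hxm.2])
    apply mul_neg_of_pos_of_neg hxm.1
    nlinarith [mul_pos (show (0:ℝ) < 2*x^2 - 1 by linarith) hhcx, hK]
  have hhat_Icc : qhat ∈ Set.Icc (1/Real.sqrt 2) qstar := ⟨hqh1.le, hqh2.le⟩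
  have fc_pos_low : ∀ x, 1/Real.sqrt 2 < x → x < qhat → 0 < fc x := by
    intro x h1 h2
    have := hfc_anti ⟨h1.le, (h2.trans hqh2).le⟩ hhat_Icc h2
    rw [hqh0] at this
    linarith
  have fc_neg_mid : ∀ x, qhat < x → x ≤ qstar → fc x < 0 := by
    intro x h1 h2
    have := hfc_anti hhat_Icc ⟨(hqh1.trans h1).le, h2⟩ h1
    rw [hqh0] at this
    linarith
  have fc_neg_hi : ∀ x, qstar < x → x < 1 → fc x < 0 := by
    intro x h1 h2
    have hxm : x ∈ Set.Ioo (0:ℝ) 1 := ⟨lt_trans hqs1 h1, h2⟩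
    exact fc_neg_upper hxm (sq_gt x (lt_trans (hqh1.trans hqh2) h1))
      (by linarith [hc_neg x hxm h1])
  have m1 : StrictMonoOn gc (Ioc (1 / Real.sqrt 2) qhat) := by
    apply strictMonoOn_of_deriv_pos (convex_Ioc _ _)
      (gc_contOn.mono (fun x hx => ⟨lt_trans hs2pos hx.1,
        lt_of_le_of_lt hx.2 (lt_trans hqh2 hqs2)⟩))
    intro x hx
    rw [interior_Ioc] at hx
    have hxm : x ∈ Set.Ioo (0:ℝ) 1 :=
      ⟨lt_trans hs2pos hx.1, lt_trans (hx.2.trans hqh2) hqs2⟩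
    rw [(hasDerivAt_gc hxm).deriv]
    apply div_pos
    · exact mul_pos (mul_pos (by norm_num)
        (hc_pos x hxm (hx.2.trans hqh2))) (fc_pos_low x hx.1 hx.2)
    · have := hxm.1; have := hxm.2; nlinarith
  have m2 : StrictAntiOn gc (Icc qhat qstar) := by
    apply strictAntiOn_of_deriv_neg (convex_Icc _ _)
      (gc_contOn.mono (fun x hx => ⟨lt_of_lt_of_le hhat_mem.1 hx.1, lt_of_le_of_lt hx.2 hqs2⟩))
    intro x hx
    rw [interior_Icc] at hx
    have hxm : x ∈ Set.Ioo (0:ℝ) 1 := ⟨lt_trans hhat_mem.1 hx.1, lt_trans hx.2 hqs2⟩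
    rw [(hasDerivAt_gc hxm).deriv]
    apply div_neg_of_neg_of_pos
    · exact mul_neg_of_pos_of_neg (mul_pos (by norm_num) (hc_pos x hxm hx.2))
        (fc_neg_mid x hx.1 hx.2.le)
    · have := hxm.1; have := hxm.2; nlinarith
  have m3 : StrictMonoOn gc (Ico qstar 1) := by
    apply strictMonoOn_of_deriv_pos (convex_Ico _ _)
      (gc_contOn.mono (fun x hx => ⟨lt_of_lt_of_le hqs1 hx.1, hx.2⟩))
    intro x hx
    rw [interior_Ico] at hx
    have hxm : x ∈ Set.Ioo (0:ℝ) 1 := ⟨lt_trans hqs1 hx.1, hx.2⟩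
    rw [(hasDerivAt_gc hxm).deriv]
    apply div_pos
    · exact mul_pos_of_neg_of_neg
        (by nlinarith [hc_neg x hxm hx.1]) (fc_neg_hi x hx.1 hx.2)
    · have := hxm.1; have := hxm.2; nlinarith
  refine ⟨m1, m2, m3, ?_, ?_⟩
  · have hnb : Set.Ioo (1/Real.sqrt 2) qstar ∈ nhds qhat :=
      isOpen_Ioo.mem_nhds ⟨hqh1, hqh2⟩
    filter_upwards [hnb] with x hx
    rcases le_total x qhat with h | h
    · rcases eq_or_lt_of_le h with rfl | hlt
      · exact le_rfl
      · exact (m1 ⟨hx.1, hlt.le⟩ ⟨hqh1, le_rfl⟩ hlt).le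
    · rcases eq_or_lt_of_le h with rfl | hlt
      · exact le_rfl
      · exact (m2 ⟨le_rfl, hqh2.le⟩ ⟨h, hx.2.le⟩ hlt).le
  · have hz : 2 * Ec qstar - Kc qstar = 0 := by linarith
    rw [gc, hz]
    ring

end Final
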